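/- Consider a one-layer ReLU network with weight matrix W and a partition {X^(1),…,X^(p)} of the input uncertainty set X. Suppose l, u are preactivation bounds valid on X with l ≤ 0 ≤ u and l < u componentwise, and for each j, l^(j), u^(j) are preactivation bounds valid on X^(j) satisfying l ≤ l^(j) ≤ 0 ≤ u^(j) ≤ u and l^(j) < u^(j) componentwise. Then max_{j∈{1,…,p}} f̂*(X^(j); l^(j), u^(j)) ≤ f̂*(X; l, u); i.e., partitioning tightens the LP relaxation bound. -/
import Mathlib


open Finset Matrix

noncomputable section

/-- Membership of `(x, z)` in the relaxed ReLU network constraint set `N(W, l, u)`. -/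
def InRelax {nx nz : ℕ} (W : Matrix (Fin nz) (Fin nx) ℝ) (l u : Fin nz → ℝ)
    (x : Fin nx → ℝ) (z : Fin nz → ℝ) : Prop :=
  ∀ i, 0 ≤ z i ∧ W.mulVec x i ≤ z i ∧
    z i ≤ u i * (W.mulVec x i - l i) / (u i - l i)

/-- Values `cᵀ z` over the LP relaxation feasible set `{(x,z) : x ∈ X, (x,z) ∈ N(W,l,u)}`. -/
def hatVals {nx nz : ℕ} (W : Matrix (Fin nz) (Fin nx) ℝ) (c : Fin nz → ℝ)
    (X : Set (Fin nx → ℝ)) (l u : Fin nz → ℝ) : Set ℝ :=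
  {v | ∃ x z, x ∈ X ∧ InRelax W l u x z ∧ v = ∑ i, c i * z i}

lemma chord_mono {l u lj uj t : ℝ} (h1 : l ≤ lj) (h2 : lj ≤ 0) (h3 : 0 ≤ uj)
    (h4 : uj ≤ u) (h5 : lj < uj) (ht1 : lj ≤ t) (ht2 : t ≤ uj) :
    uj * (t - lj) / (uj - lj) ≤ u * (t - l) / (u - l) := by
  rw [div_le_div_iff₀ (by linarith) (by linarith)]
  nlinarith [mul_nonneg (sub_nonneg.2 ht2) (mul_nonneg (mul_nonneg (by linarith : (0:ℝ) ≤ u) (by linarith : (0:ℝ) ≤ lj - l)) (by linarith : (0:ℝ) ≤ uj - lj)),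
    mul_nonneg (sub_nonneg.2 ht1) (mul_nonneg (mul_nonneg (by linarith : (0:ℝ) ≤ uj - lj) (by linarith : (0:ℝ) ≤ -l)) (by linarith : (0:ℝ) ≤ u - uj))]

/-- Partitioning the input uncertainty set tightens the LP relaxation
bound: `max_j f̂*(X⁽ʲ⁾; l⁽ʲ⁾, u⁽ʲ⁾) ≤ f̂*(X; l, u)`.  All suprema are assumed attained
(`IsGreatest`). -/
theorem partition_tightens_lp_relaxation {nx nz p : ℕ}
    (W : Matrix (Fin nz) (Fin nx) ℝ) (c : Fin nz → ℝ)
    (X : Set (Fin nx → ℝ)) (Xp : Fin p → Set (Fin nx → ℝ))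
    -- `{X⁽ʲ⁾}` is a partition of `X`
    (hcover : (⋃ j, Xp j) = X)
    (hdisj : ∀ j k, j ≠ k → Xp j ∩ Xp k = ∅)
    -- bounds on `X`: valid, with `l ≤ 0 ≤ u` and `l < u`
    (l u : Fin nz → ℝ)
    (hsign : ∀ i, l i ≤ 0 ∧ 0 ≤ u i ∧ l i < u i)
    (hvalid : ∀ x ∈ X, ∀ i, l i ≤ W.mulVec x i ∧ W.mulVec x i ≤ u i)
    -- per-part bounds: valid on parts, with `l ≤ l⁽ʲ⁾ ≤ 0 ≤ u⁽ʲ⁾ ≤ u` and `l⁽ʲ⁾ < u⁽ʲ⁾`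
    (lp up : Fin p → Fin nz → ℝ)
    (hpsign : ∀ j i, l i ≤ lp j i ∧ lp j i ≤ 0 ∧ 0 ≤ up j i ∧ up j i ≤ u i ∧
      lp j i < up j i)
    (hpvalid : ∀ j, ∀ x ∈ Xp j, ∀ i, lp j i ≤ W.mulVec x i ∧ W.mulVec x i ≤ up j i)
    -- attained optimal values of the LP relaxations
    (Fhat : ℝ) (hFhat : IsGreatest (hatVals W c X l u) Fhat)
    (F : Fin p → ℝ)
    (hF : ∀ j, IsGreatest (hatVals W c (Xp j) (lp j) (up j)) (F j)) :
    (⨆ j, F j) ≤ Fhat := by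
  rcases Nat.eq_zero_or_pos p with hp | hp
  · subst hp
    exfalso
    obtain ⟨x, z, hx, -, -⟩ := hFhat.1
    rw [← hcover] at hx
    simpa using hx
  · haveI : Nonempty (Fin p) := ⟨⟨0, hp⟩⟩
    apply ciSup_le
    intro j
    obtain ⟨x, z, hx, hrel, hval⟩ := (hF j).1
    apply hFhat.2
    refine ⟨x, z, ?_, ?_, hval⟩
    · rw [← hcover]; exact Set.mem_iUnion.2 ⟨j, hx⟩
    · intro i
      obtain ⟨hz0, hzw, hzu⟩ := hrel i
      refine ⟨hz0, hzw, hzu.trans ?_⟩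
      obtain ⟨hl, hwl⟩ := hpvalid j x hx i
      obtain ⟨a1, a2, a3, a4, a5⟩ := hpsign j i
      exact chord_mono a1 a2 a3 a4 a5 hl hwl
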